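/- Let n ≥ 1, a ∈ ℝ, P = I − (1/n)𝟙𝟙ᵀ, W = {P e_1, …, P e_n}, and define φ_ord : ℝ₊^n → ℝ^n × ℝ by φ_ord(x) = (P x, a − (1/n) Σ_k x_k). Then φ_ord is injective, and for all x, y ∈ ℝ₊^n the reversed product order relation x ⪰_ord y (meaning x_k ≤ y_k for all k = 1, …, n) holds if and only if d_W(P x, P y) ≤ r_x − r_y, where r_x = a − (1/n) Σ_k x_k and r_y = a − (1/n) Σ_k y_k. That is, Order Embeddings are order isomorphic to Disk Embeddings with quasi-metric d_W via φ_ord. -/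

import Mathlib

open RealInnerProductSpace

/-- Order Embeddings are order isomorphic to Euclidean Disk Embeddings with the
polyhedral quasi-metric `d_W`, `W = {P e_1, …, P e_n}`, via the map
`φ_ord(x) = (P x, a − (1/n) Σ_k x_k)`: the map `φ_ord` is injective on `ℝ₊^n`, and
for `x, y ∈ ℝ₊^n` the reversed product order `x ⪰_ord y` (i.e. `x_k ≤ y_k` for all
`k`) holds iff `d_W(P x, P y) ≤ r_x − r_y`. -/
theorem order_embeddings_iso_disk_embeddings {n : ℕ} (hn : 0 < n) (a : ℝ) :
    let P : EuclideanSpace ℝ (Fin n) → EuclideanSpace ℝ (Fin n) :=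
      fun v => WithLp.toLp 2 (fun i => v i - (∑ k, v k) / n)
    let e : Fin n → EuclideanSpace ℝ (Fin n) := fun k => EuclideanSpace.single k 1
    let hne : (Finset.univ : Finset (Fin n)).Nonempty := ⟨⟨0, hn⟩, Finset.mem_univ _⟩
    let dW : EuclideanSpace ℝ (Fin n) → EuclideanSpace ℝ (Fin n) → ℝ :=
      fun u v => Finset.univ.sup' hne fun k => ⟪P (e k), u - v⟫
    let φ : EuclideanSpace ℝ (Fin n) → EuclideanSpace ℝ (Fin n) × ℝ :=
      fun v => (P v, a - (∑ k, v k) / n)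
    (∀ x y : EuclideanSpace ℝ (Fin n), (∀ i, 0 ≤ x i) → (∀ i, 0 ≤ y i) →
      φ x = φ y → x = y) ∧
    (∀ x y : EuclideanSpace ℝ (Fin n), (∀ i, 0 ≤ x i) → (∀ i, 0 ≤ y i) →
      ((∀ k, x k ≤ y k) ↔
        dW (P x) (P y) ≤ (a - (∑ k, x k) / n) - (a - (∑ k, y k) / n))) := by
  intro P e hne dW φ
  have hn' : (n : ℝ) ≠ 0 := Nat.cast_ne_zero.mpr hn.ne'
  constructor
  · intro x y _ _ h
    have h1 : P x = P y := congrArg Prod.fst h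
    have h2 : (∑ k, x k) / n = (∑ k, y k) / n := by
      have := congrArg Prod.snd h
      simp only [φ] at this
      linarith
    ext i
    have h3 := congrArg (fun v => v i) h1
    simp only [P, PiLp.toLp_apply] at h3
    linarith
  · intro x y _ _
    have key : ∀ k, ⟪P (e k), P x - P y⟫ =
        (x k - y k) - ((∑ j, x j) - ∑ j, y j) / n := by
      intro k
      have hsum : ∑ i, ((x i - (∑ j, x j) / n) - (y i - (∑ j, y j) / n)) = 0 := by
        simp only [Finset.sum_sub_distrib, Finset.sum_const, Finset.card_univ,
          Fintype.card_fin, nsmul_eq_mul]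
        field_simp
        ring
      have hek : ∑ j, e k j = 1 := by
        simp [e, EuclideanSpace.single_apply]
      simp only [PiLp.inner_apply, RCLike.inner_apply, starRingEnd_apply, star_trivial,
        PiLp.sub_apply, P]
      rw [hek]
      have expand : ∀ i, (e k i - 1 / n) *
          ((x i - (∑ j, x j) / n) - (y i - (∑ j, y j) / n)) =
          e k i * ((x i - (∑ j, x j) / n) - (y i - (∑ j, y j) / n))
          - (1 / n) * ((x i - (∑ j, x j) / n) - (y i - (∑ j, y j) / n)) := by
        intro i; ring
      rw [Finset.sum_congr rfl fun i _ => (mul_comm _ _).trans (expand i), Finset.sum_sub_distrib,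
        ← Finset.mul_sum, hsum, mul_zero, sub_zero]
      have : ∑ i, e k i * ((x i - (∑ j, x j) / n) - (y i - (∑ j, y j) / n)) =
          (x k - (∑ j, x j) / n) - (y k - (∑ j, y j) / n) := by
        rw [Finset.sum_eq_single k]
        · simp [e, EuclideanSpace.single_apply]
        · intro b _ hb
          simp [e, EuclideanSpace.single_apply, hb]
        · intro hk; exact absurd (Finset.mem_univ k) hk
      rw [this]; ring
    have hd : dW (P x) (P y) = Finset.univ.sup' hne fun k =>
        (x k - y k) - ((∑ j, x j) - ∑ j, y j) / n := by
      simp only [dW]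
      exact Finset.sup'_congr hne rfl fun k _ => key k
    rw [hd]
    constructor
    · intro h
      rw [Finset.sup'_le_iff]
      intro k _
      have := h k
      have hdiv : ((∑ j, x j) - ∑ j, y j) / n = (∑ j, x j) / n - (∑ j, y j) / n := sub_div _ _ _
      linarith
    · intro h k
      have := (Finset.sup'_le_iff hne _).mp h k (Finset.mem_univ k)
      have hdiv : ((∑ j, x j) - ∑ j, y j) / n = (∑ j, x j) / n - (∑ j, y j) / n := sub_div _ _ _
      linarith
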